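/- Let α be a real number with 0 < α ≤ 0.6, let b₀ ≥ 1 be an integer, let m be an integer with m ≥ b₀ + 1, and let b_0, b_1, …, b_m be a non-decreasing sequence of positive real numbers with b_0 = b₀. Then ∑_{j=0}^{m−1} (α·(b_{j+1} − b_j) + 1)/b_j − 1/(2·b_{m−1}) ≥ α·(1 + ln(1/α) − ln(b₀) + ln(m)). -/

import Mathlib

open Real

lemma aux_two_log_le {s : ℝ} (hs : 1 ≤ s) : 2 * Real.log s ≤ s - 1 / s := by
  have hmono : MonotoneOn (fun x : ℝ => x - 1 / x - 2 * Real.log x) (Set.Ici 1) := by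
    have hderiv : ∀ x ∈ interior (Set.Ici (1:ℝ)),
        HasDerivAt (fun x : ℝ => x - 1 / x - 2 * Real.log x) ((x - 1)^2 / x^2) x := by
      intro x hx
      rw [interior_Ici] at hx
      have hx0 : (0:ℝ) < x := lt_trans one_pos hx
      have h1 : HasDerivAt (fun x : ℝ => x) 1 x := hasDerivAt_id x
      have h2 : HasDerivAt (fun x : ℝ => 1 / x) (-(x ^ 2)⁻¹) x := by
        simpa [one_div] using hasDerivAt_inv hx0.ne'
      have h3 : HasDerivAt (fun x : ℝ => 2 * Real.log x) (2 * x⁻¹) x :=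
        (Real.hasDerivAt_log hx0.ne').const_mul 2
      have h := (h1.sub h2).sub h3
      convert h using 1
      · exact rfl
      · exact rfl
      · exact rfl
      field_simp
      ring
    apply monotoneOn_of_deriv_nonneg (convex_Ici 1)
    · apply ContinuousOn.sub
      · apply ContinuousOn.sub continuousOn_id
        exact ContinuousOn.div continuousOn_const continuousOn_id
          (fun x hx => by have : (1:ℝ) ≤ x := hx; positivity)
      · exact ContinuousOn.mul continuousOn_const
          (Real.continuousOn_log.mono (fun x hx => by
            have : (1:ℝ) ≤ x := hx
            simp only [Set.mem_compl_iff, Set.mem_singleton_iff]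
            intro h; rw [h] at this; linarith))
    · intro x hx
      exact (hderiv x hx).differentiableAt.differentiableWithinAt
    · intro x hx
      rw [(hderiv x hx).deriv]
      positivity
  have h := hmono (Set.self_mem_Ici) (Set.mem_Ici.mpr hs) hs
  simp only [Real.log_one] at h
  norm_num at h
  rw [one_div]
  linarith

set_option maxHeartbeats 1000000 in
theorem stmt_1 (α : ℝ) (hα0 : 0 < α) (hα : α ≤ 0.6)
    (b₀ m : ℕ) (hb₀ : 1 ≤ b₀) (hm : b₀ + 1 ≤ m)
    (b : ℕ → ℝ) (hpos : ∀ j ≤ m, 0 < b j) (hmono : ∀ j < m, b j ≤ b (j + 1))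
    (hb0 : b 0 = (b₀ : ℝ)) :
    ∑ j ∈ Finset.range m, (α * (b (j + 1) - b j) + 1) / b j - 1 / (2 * b (m - 1)) ≥
      α * (1 + Real.log (1 / α) - Real.log (b₀ : ℝ) + Real.log (m : ℝ)) := by
  have hm2 : 2 ≤ m := by omega
  have hmR : (2:ℝ) ≤ (m:ℝ) := by exact_mod_cast hm2
  have hb0R : (1:ℝ) ≤ (b₀:ℝ) := by exact_mod_cast hb₀
  have hb0m : (b₀:ℝ) + 1 ≤ (m:ℝ) := by exact_mod_cast hm
  have hb0pos : (0:ℝ) < b 0 := hpos 0 (Nat.zero_le m)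
  -- chain monotonicity
  have hchain : ∀ j k, j ≤ k → k ≤ m → b j ≤ b k := by
    intro j k hjk hkm
    induction k, hjk using Nat.le_induction with
    | base => exact le_refl _
    | succ k hk ih => exact le_trans (ih (by omega)) (hmono k (by omega))
  set B := b (m - 1) with hBdef
  have hB : 0 < B := hpos (m - 1) (by omega)
  have hBm : B ≤ b m := by
    have h := hmono (m - 1) (by omega)
    have hh : m - 1 + 1 = m := by omega
    rwa [hh] at h
  set c : ℝ := (m:ℝ) - 3/2 with hcdef
  have hc : (0:ℝ) < c := by simp only [hcdef]; linarith
  -- split the sum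
  have hsum_split : ∑ j ∈ Finset.range m, (α * (b (j + 1) - b j) + 1) / b j =
      (∑ j ∈ Finset.range m, α * (b (j + 1) - b j) / b j) +
      (∑ j ∈ Finset.range m, 1 / b j) := by
    rw [← Finset.sum_add_distrib]
    apply Finset.sum_congr rfl
    intro j hj
    rw [add_div]
  -- telescoping log bound
  have hA : α * Real.log B - α * Real.log (b 0) ≤
      ∑ j ∈ Finset.range m, α * (b (j + 1) - b j) / b j := by
    have step : ∀ j ∈ Finset.range m,
        α * (Real.log (b (j + 1)) - Real.log (b j)) ≤ α * (b (j + 1) - b j) / b j := by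
      intro j hj
      have hjm : j < m := Finset.mem_range.mp hj
      have h1 : 0 < b j := hpos j hjm.le
      have h2 : 0 < b (j + 1) := hpos (j + 1) hjm
      have hlog : Real.log (b (j + 1)) - Real.log (b j) ≤ (b (j + 1) - b j) / b j := by
        have h3 := Real.log_le_sub_one_of_pos (div_pos h2 h1)
        rw [Real.log_div h2.ne' h1.ne'] at h3
        have h4 : b (j + 1) / b j - 1 = (b (j + 1) - b j) / b j := by
          field_simp
        linarith [h4 ▸ h3]
      calc α * (Real.log (b (j + 1)) - Real.log (b j))
          ≤ α * ((b (j + 1) - b j) / b j) := mul_le_mul_of_nonneg_left hlog hα0.le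
        _ = α * (b (j + 1) - b j) / b j := by ring
    have htel : ∑ j ∈ Finset.range m, α * (Real.log (b (j + 1)) - Real.log (b j)) =
        α * (Real.log (b m) - Real.log (b 0)) := by
      rw [← Finset.mul_sum, Finset.sum_range_sub (fun j => Real.log (b j))]
    have hlogBm : Real.log B ≤ Real.log (b m) := Real.log_le_log hB hBm
    have := Finset.sum_le_sum step
    rw [htel] at this
    nlinarith [mul_le_mul_of_nonneg_left hlogBm hα0.le]
  -- harmonic part
  have hC : 1 / b 0 + ((m:ℝ) - 1) / B ≤ ∑ j ∈ Finset.range m, 1 / b j := by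
    have hm1 : m - 1 + 1 = m := by omega
    have e1 : ∑ j ∈ Finset.range m, 1 / b j =
        (∑ j ∈ Finset.range (m - 1), 1 / b (j + 1)) + 1 / b 0 := by
      conv_lhs => rw [← hm1]
      exact Finset.sum_range_succ' _ _
    have e2 : ∀ j ∈ Finset.range (m - 1), 1 / B ≤ 1 / b (j + 1) := by
      intro j hj
      have hjm : j < m - 1 := Finset.mem_range.mp hj
      have hle : b (j + 1) ≤ B := hchain (j + 1) (m - 1) (by omega) (by omega)
      exact one_div_le_one_div_of_le (hpos (j + 1) (by omega)) hle
    have e3 : ((m:ℝ) - 1) / B ≤ ∑ j ∈ Finset.range (m - 1), 1 / b (j + 1) := by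
      have := Finset.sum_le_sum e2
      rw [Finset.sum_const, Finset.card_range] at this
      have hcast : ((m - 1 : ℕ):ℝ) = (m:ℝ) - 1 := by
        rw [Nat.cast_sub (by omega)]; norm_num
      calc ((m:ℝ) - 1) / B = ((m - 1 : ℕ):ℝ) * (1 / B) := by rw [hcast]; ring
        _ ≤ _ := by simpa [nsmul_eq_mul] using this
    rw [e1]; linarith [e3]
  -- step E : α log B + c / B ≥ α log c - α log α + α
  have hE : α * Real.log c - α * Real.log α + α - c / B ≤ α * Real.log B := by
    have ht : (0:ℝ) < c / (α * B) := div_pos hc (mul_pos hα0 hB)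
    have h1 := Real.log_le_sub_one_of_pos ht
    rw [Real.log_div hc.ne' (mul_pos hα0 hB).ne', Real.log_mul hα0.ne' hB.ne'] at h1
    have h2 := mul_le_mul_of_nonneg_left h1 hα0.le
    have h3 : α * (c / (α * B) - 1) = c / B - α := by field_simp
    nlinarith [h2, h3]
  -- step F : 1 / b 0 ≥ α * (log m - log c)
  have hF : α * Real.log (m:ℝ) - α * Real.log c ≤ 1 / b 0 := by
    set s : ℝ := Real.sqrt ((m:ℝ) / c) with hsdef
    have hx1 : (1:ℝ) ≤ (m:ℝ) / c := by
      rw [le_div_iff₀ hc]; simp only [hcdef]; linarith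
    have hs1 : (1:ℝ) ≤ s := by
      rw [hsdef, show (1:ℝ) = Real.sqrt 1 from (Real.sqrt_one).symm]
      exact Real.sqrt_le_sqrt hx1
    have hs0 : (0:ℝ) < s := lt_of_lt_of_le one_pos hs1
    have hs2 : s ^ 2 = (m:ℝ) / c := Real.sq_sqrt (by positivity)
    have hlog1 : Real.log ((m:ℝ) / c) = 2 * Real.log s := by
      rw [← hs2, Real.log_pow]; push_cast; ring
    have hlog2 : Real.log (m:ℝ) - Real.log c ≤ s - 1 / s := by
      rw [← Real.log_div (by positivity) hc.ne', hlog1]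
      exact aux_two_log_le hs1
    -- now bound α * (s - 1/s) ≤ 1 / b 0
    have hkey : α * (s - 1 / s) ≤ 1 / b 0 := by
      have hsub : s - 1 / s = (3/2) / (c * s) := by
        have e : s - 1 / s = (s ^ 2 - 1) / s := by field_simp
        have e2 : s ^ 2 - 1 = (3/2) / c := by
          rw [hs2, eq_div_iff hc.ne', sub_mul, div_mul_cancel₀ _ hc.ne']
          simp only [hcdef]; ring
        rw [e, e2, div_div]
      rw [hsub, hb0]
      have eα : α * (3 / 2 / (c * s)) = (α * 3 / 2) / (c * s) := by ring
      rw [eα, div_le_div_iff₀ (by positivity) (by positivity)]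
      rw [one_mul]
      -- need α * (3/2) * b₀ ≤ c * s, square both sides
      have hcs : (0:ℝ) < c * s := by positivity
      have hcssq : (c * s) ^ 2 = c * (m:ℝ) := by
        rw [mul_pow, hs2]; field_simp
      have hlhs : (0:ℝ) ≤ α * 3/2 * (b₀:ℝ) := by positivity
      have hsq : (α * 3/2 * (b₀:ℝ)) ^ 2 ≤ (c * s) ^ 2 := by
        rw [hcssq]
        have hb0le : (b₀:ℝ) ≤ (m:ℝ) - 1 := by linarith
        have h1 : α * 3/2 * (b₀:ℝ) ≤ (9/10) * ((m:ℝ) - 1) := by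
          have : α * 3/2 ≤ 9/10 := by norm_num at hα ⊢; linarith
          nlinarith [hb0R, hα0]
        have h2 : ((9/10) * ((m:ℝ) - 1)) ^ 2 ≤ c * (m:ℝ) := by
          simp only [hcdef]; nlinarith [hmR]
        nlinarith [hlhs, h1, h2]
      have : α * 3/2 * (b₀:ℝ) ≤ c * s := by
        have h := Real.sqrt_le_sqrt hsq
        rwa [Real.sqrt_sq hlhs, Real.sqrt_sq hcs.le] at h
      linarith [this]
    have hmul := mul_le_mul_of_nonneg_left hlog2 hα0.le
    linarith [hmul, hkey, mul_sub α (Real.log (m:ℝ)) (Real.log c)]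
  -- combine everything
  have hcB : ((m:ℝ) - 1) / B - 1 / (2 * B) = c / B := by
    simp only [hcdef]; field_simp; ring
  have hRHS : α * (1 + Real.log (1 / α) - Real.log (b₀:ℝ) + Real.log (m:ℝ)) =
      α - α * Real.log α - α * Real.log (b₀:ℝ) + α * Real.log (m:ℝ) := by
    rw [one_div, Real.log_inv]; ring
  rw [hsum_split, hRHS, ge_iff_le]
  rw [hb0] at hC hF
  have hlogb0 : α * Real.log B - α * Real.log (b₀:ℝ) ≤
      ∑ j ∈ Finset.range m, α * (b (j + 1) - b j) / b j := by rw [← hb0]; exact hA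
  linarith [hA, hC, hE, hF, hlogb0, hcB]
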